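/- arXiv:1004.4082 — 4 statements merged into one kernel-verified Lean document; each statement's English description precedes it below -/
import Mathlib

section
/- Let L be a finite lattice and P ⊆ L a subset such that the map ψ : a ↦ {p ∈ P : p ≤ a} is a semilattice isomorphism from L onto the lattice of ⋁-ideals of the partial semilattice (P, ⋁). Then P contains every nonzero join-irreducible element of L. -/
/-- A `⋁`-ideal of the partial semilattice determined by a subset `P` of a
lattice `L`: an order ideal of `P` closed under all (nonempty finite) joins
that land in `P`. -/
def VIdeal {L : Type*} [Lattice L] (P : Set L) (A : Set L) : Prop :=
  A ⊆ P ∧ (∀ a ∈ A, ∀ b ∈ P, b ≤ a → b ∈ A) ∧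
    ∀ (X : Finset L) (hX : X.Nonempty), (X : Set L) ⊆ A →
      X.sup' hX id ∈ P → X.sup' hX id ∈ A

lemma supIrred_sup'_eq {L : Type*} [Lattice L] {q : L} (hq : SupIrred q) :
    ∀ (X : Finset L) (hX : X.Nonempty), X.sup' hX id = q → ∃ b ∈ X, b = q := by
  intro X hX
  induction hX using Finset.Nonempty.cons_induction with
  | singleton a => intro h; exact ⟨a, by simpa using h⟩
  | cons a s ha hs ih =>
      intro h
      rw [Finset.sup'_cons (H := hs)] at h
      rcases hq.2 h with h1 | h2
      · exact ⟨a, Finset.mem_cons_self a s, h1⟩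
      · obtain ⟨b, hb, hbq⟩ := ih h2
        exact ⟨b, Finset.mem_cons_of_mem hb, hbq⟩

/-- If `L` is a finite lattice, `P ⊆ L`, and `ψ : a ↦ {p ∈ P | p ≤ a}` is a
semilattice isomorphism of `L` onto the `⋁`-ideals of `(P, ⋁)` (an order
isomorphism onto `Id(P,⋁)`), then `P` contains every nonzero join-irreducible
element of `L`. -/
theorem join_irreducibles_subset {L : Type*} [Lattice L] [Fintype L]
    (P : Set L)
    (hiso : ∀ a b : L, a ≤ b ↔ {p ∈ P | p ≤ a} ⊆ {p ∈ P | p ≤ b})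
    (hsurj : ∀ A : Set L, VIdeal P A → A.Nonempty → ∃ a : L, {p ∈ P | p ≤ a} = A) :
    ∀ q : L, SupIrred q → q ∈ P := by
  intro q hq
  set D : Set L := {p ∈ P | p ≤ q} with hD
  by_cases hne : D.Nonempty
  · -- take the join of D
    have hfin : D.Finite := Set.toFinite D
    set X : Finset L := hfin.toFinset with hXdef
    have hXne : X.Nonempty := by
      simpa [hXdef, Set.Finite.toFinset_nonempty] using hne
    set s : L := X.sup' hXne id with hs
    have hsq : s ≤ q := by
      apply Finset.sup'_le
      intro b hb
      have : b ∈ D := by simpa [hXdef] using hb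
      exact this.2
    have hqs : q ≤ s := by
      rw [hiso]
      intro p hp
      have hpX : p ∈ X := by simpa [hXdef, hD] using hp
      exact ⟨hp.1, Finset.le_sup' id hpX⟩
    have hsqe : s = q := le_antisymm hsq hqs
    obtain ⟨b, hb, rfl⟩ := supIrred_sup'_eq hq X hXne hsqe
    have : b ∈ D := by simpa [hXdef] using hb
    exact this.1
  · -- D empty: q is minimal, contradiction
    exfalso
    apply hq.1
    intro b hb
    rw [hiso]
    intro p hp
    exact absurd hp (fun h => hne ⟨p, h⟩)
end

section
/- Let F and T be distributive lattices with F finite, and suppose the set J₀(F) of join-irreducibles of F together with the bottom element is closed under binary meets. Then every meet-preserving map φ̄ : J₀(F) → T extends to a lattice homomorphism Φ : F → T given by Φ(x) = ⋁{φ̄(s) : s ∈ J₀(F), s ≤ x}. -/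
/-- Let `F` and `T` be distributive lattices with `F` finite, and suppose the
set `J₀(F)` of join-irreducibles of `F` together with the bottom element is
closed under binary meets. Then every meet-preserving map `φ : J₀(F) → T`
extends to a lattice homomorphism `Φ : F → T` given by
`Φ x = ⋁ {φ s | s ∈ J₀(F), s ≤ x}`. -/
theorem extend_meet_map_to_hom {F T : Type*}
    [DistribLattice F] [Fintype F] [OrderBot F] [DistribLattice T]
    (J0 : Set F) (hJ0 : J0 = {s : F | SupIrred s ∨ s = ⊥})
    (hmeet : ∀ s ∈ J0, ∀ t ∈ J0, s ⊓ t ∈ J0)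
    (φ : F → T)
    (hφ : ∀ s ∈ J0, ∀ t ∈ J0, φ (s ⊓ t) = φ s ⊓ φ t) :
    ∃ Φ : F → T,
      (∀ x y : F, Φ (x ⊔ y) = Φ x ⊔ Φ y) ∧
      (∀ x y : F, Φ (x ⊓ y) = Φ x ⊓ Φ y) ∧
      (∀ s ∈ J0, Φ s = φ s) ∧
      (∀ x : F, IsLUB {t : T | ∃ s ∈ J0, s ≤ x ∧ t = φ s} (Φ x)) := by
  classical
  have hbot : (⊥ : F) ∈ J0 := by rw [hJ0]; exact Or.inr rfl
  set S : F → Finset F := fun x => Finset.univ.filter (fun s => s ∈ J0 ∧ s ≤ x) with hS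
  have hmemS : ∀ x s, s ∈ S x ↔ s ∈ J0 ∧ s ≤ x := by
    intro x s; simp [hS]
  have hne : ∀ x, (S x).Nonempty := fun x => ⟨⊥, (hmemS x ⊥).2 ⟨hbot, bot_le⟩⟩
  have hφmono : ∀ s ∈ J0, ∀ t ∈ J0, s ≤ t → φ s ≤ φ t := by
    intro s hs t ht hst
    have : φ (s ⊓ t) = φ s ⊓ φ t := hφ s hs t ht
    rw [inf_eq_left.2 hst] at this
    rw [this]; exact inf_le_right
  refine ⟨fun x => (S x).sup' (hne x) φ, ?_, ?_, ?_, ?_⟩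
  · -- sup
    intro x y
    apply le_antisymm
    · apply Finset.sup'_le
      intro s hs
      obtain ⟨hsJ, hsle⟩ := (hmemS _ s).1 hs
      have hsJ' : SupIrred s ∨ s = ⊥ := by rw [hJ0] at hsJ; exact hsJ
      rcases hsJ' with hirr | hb
      · rcases hirr.supPrime.2 hsle with h | h
        · exact le_sup_of_le_left (Finset.le_sup' φ ((hmemS x s).2 ⟨hsJ, h⟩))
        · exact le_sup_of_le_right (Finset.le_sup' φ ((hmemS y s).2 ⟨hsJ, h⟩))
      · subst hb
        exact le_sup_of_le_left (Finset.le_sup' φ ((hmemS x ⊥).2 ⟨hsJ, bot_le⟩))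
    · apply sup_le <;>
      · apply Finset.sup'_le
        intro s hs
        obtain ⟨hsJ, hsle⟩ := (hmemS _ s).1 hs
        exact Finset.le_sup' φ ((hmemS _ s).2 ⟨hsJ, le_trans hsle (by simp)⟩)
  · -- inf
    intro x y
    apply le_antisymm
    · apply Finset.sup'_le
      intro s hs
      obtain ⟨hsJ, hsle⟩ := (hmemS _ s).1 hs
      exact le_inf (Finset.le_sup' φ ((hmemS x s).2 ⟨hsJ, hsle.trans inf_le_left⟩))
        (Finset.le_sup' φ ((hmemS y s).2 ⟨hsJ, hsle.trans inf_le_right⟩))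
    · rw [Finset.sup'_inf_sup']
      apply Finset.sup'_le
      rintro ⟨s, t⟩ hst
      rw [Finset.mem_product] at hst
      obtain ⟨hsJ, hsle⟩ := (hmemS x s).1 hst.1
      obtain ⟨htJ, htle⟩ := (hmemS y t).1 hst.2
      rw [← hφ s hsJ t htJ]
      exact Finset.le_sup' φ ((hmemS (x ⊓ y) (s ⊓ t)).2
        ⟨hmeet s hsJ t htJ, inf_le_inf hsle htle⟩)
  · -- agrees with φ on J0
    intro s hs
    apply le_antisymm
    · apply Finset.sup'_le
      intro t ht
      obtain ⟨htJ, htle⟩ := (hmemS s t).1 ht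
      exact hφmono t htJ s hs htle
    · exact Finset.le_sup' φ ((hmemS s s).2 ⟨hs, le_rfl⟩)
  · -- IsLUB
    intro x
    constructor
    · rintro t ⟨s, hsJ, hsle, rfl⟩
      exact Finset.le_sup' φ ((hmemS x s).2 ⟨hsJ, hsle⟩)
    · intro b hb
      apply Finset.sup'_le
      intro s hs
      obtain ⟨hsJ, hsle⟩ := (hmemS x s).1 hs
      exact hb ⟨s, hsJ, hsle, rfl⟩
end

section
/- Let X be a set with r elements. If s subsets A₁,…,A_s of X are chosen independently and uniformly at random, the probability that the Boolean subalgebra of the power set of X generated by A₁,…,A_s is the whole power set equals ∏_{k=1}^{r-1} (2^s − k)/2^s. -/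
/-- Membership in the Boolean subalgebra generated by a set `S`. -/
inductive BoolGen {B : Type*} [BooleanAlgebra B] (S : Set B) : B → Prop
  | base {x : B} : x ∈ S → BoolGen S x
  | bot : BoolGen S ⊥
  | top : BoolGen S ⊤
  | sup {x y : B} : BoolGen S x → BoolGen S y → BoolGen S (x ⊔ y)
  | inf {x y : B} : BoolGen S x → BoolGen S y → BoolGen S (x ⊓ y)
  | compl {x : B} : BoolGen S x → BoolGen S xᶜ

lemma boolGen_finsetSup {B : Type*} [BooleanAlgebra B] {S : Set B} {ι : Type*}
    (t : Finset ι) (g : ι → B) (h : ∀ i ∈ t, BoolGen S (g i)) :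
    BoolGen S (t.sup g) := by
  induction t using Finset.cons_induction with
  | empty => simpa using BoolGen.bot
  | cons a t ha ih =>
    rw [Finset.sup_cons]
    exact BoolGen.sup (h a (Finset.mem_cons_self a t))
      (ih fun i hi => h i (Finset.mem_cons_of_mem hi))

lemma boolGen_finsetInf {B : Type*} [BooleanAlgebra B] {S : Set B} {ι : Type*}
    (t : Finset ι) (g : ι → B) (h : ∀ i ∈ t, BoolGen S (g i)) :
    BoolGen S (t.inf g) := by
  induction t using Finset.cons_induction with
  | empty => simpa using BoolGen.top
  | cons a t ha ih =>
    rw [Finset.inf_cons]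
    exact BoolGen.inf (h a (Finset.mem_cons_self a t))
      (ih fun i hi => h i (Finset.mem_cons_of_mem hi))

lemma mem_finsetSup_set {X ι : Type*} (t : Finset ι) (g : ι → Set X) (y : X) :
    y ∈ t.sup g ↔ ∃ i ∈ t, y ∈ g i := by
  induction t using Finset.cons_induction with
  | empty => simp
  | cons a t ha ih => simp [Finset.sup_cons, Set.mem_union, ih]

lemma mem_finsetInf_set {X ι : Type*} (t : Finset ι) (g : ι → Set X) (y : X) :
    y ∈ t.inf g ↔ ∀ i ∈ t, y ∈ g i := by
  induction t using Finset.cons_induction with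
  | empty => simp
  | cons a t ha ih => simp [Finset.inf_cons, Set.mem_inter_iff, ih]

lemma boolGen_key {X : Type*} [Fintype X] [DecidableEq X] {s : ℕ}
    (A : Fin s → Finset X) :
    (∀ Y : Set X, BoolGen (Set.range fun i => ((A i : Set X))) Y) ↔
      Function.Injective (fun (x : X) (i : Fin s) => decide (x ∈ A i)) := by
  classical
  constructor
  · intro h a b hab
    have mem_iff : ∀ Z : Set X,
        BoolGen (Set.range fun i => ((A i : Set X))) Z → (a ∈ Z ↔ b ∈ Z) := by
      intro Z hZ
      induction hZ with
      | base hx =>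
        obtain ⟨i, rfl⟩ := hx
        have := congrFun hab i
        simp only [decide_eq_decide] at this
        simpa using this
      | bot => simp
      | top => simp
      | sup _ _ ih1 ih2 => simp [Set.mem_union, ih1, ih2]
      | inf _ _ ih1 ih2 => simp [Set.mem_inter_iff, ih1, ih2]
      | compl _ ih => simp [Set.mem_compl_iff, ih]
    have hb := (mem_iff {a} (h {a})).mp rfl
    simpa using hb.symm
  · intro hinj Y
    have hsingle : ∀ x : X, BoolGen (Set.range fun i => ((A i : Set X))) {x} := by
      intro x
      have hx : ({x} : Set X) =
          Finset.univ.inf (fun i : Fin s =>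
            if x ∈ A i then (A i : Set X) else ((A i : Set X))ᶜ) := by
        ext y
        simp only [mem_finsetInf_set, Set.mem_singleton_iff, Finset.mem_univ,
          forall_true_left]
        constructor
        · rintro rfl i
          split <;> simp_all
        · intro hy
          have hfun : (fun i => decide (y ∈ A i)) = (fun i => decide (x ∈ A i)) := by
            funext i
            have hyi := hy i
            by_cases hxi : x ∈ A i
            · simp only [if_pos hxi] at hyi
              simp_all
            · simp only [if_neg hxi] at hyi
              simp_all
          exact hinj hfun
      rw [hx]
      apply boolGen_finsetInf
      intro i _
      split
      · exact BoolGen.base ⟨i, rfl⟩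
      · exact BoolGen.compl (BoolGen.base ⟨i, rfl⟩)
    have hY : Y = (Finset.univ.filter (fun x => x ∈ Y)).sup (fun x => ({x} : Set X)) := by
      ext y
      simp [mem_finsetSup_set, Finset.mem_filter]
    rw [hY]
    exact boolGen_finsetSup _ _ fun x _ => hsingle x

lemma cast_descFactorial (n k : ℕ) :
    ((n.descFactorial k : ℕ) : ℚ) = ∏ i ∈ Finset.range k, ((n : ℚ) - i) := by
  induction k with
  | zero => simp
  | succ k ih =>
    by_cases h : n ≤ k
    · have h0 : n.descFactorial (k + 1) = 0 :=
        Nat.descFactorial_eq_zero_iff_lt.mpr (Nat.lt_succ_of_le h)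
      rw [h0]
      symm
      rw [Finset.prod_eq_zero (Finset.mem_range.mpr (Nat.lt_succ_of_le h))]
      · simp
      · simp
    · push_neg at h
      rw [Finset.prod_range_succ, ← ih, Nat.descFactorial_succ]
      push_cast [Nat.cast_sub h.le]
      ring

/-- Tuples of finsets correspond to functions into Bool-vectors. -/
def finsetTupleEquiv (X : Type*) [Fintype X] [DecidableEq X] (s : ℕ) :
    (Fin s → Finset X) ≃ (X → Fin s → Bool) where
  toFun A x i := decide (x ∈ A i)
  invFun g i := Finset.univ.filter (fun x => g x i = true)
  left_inv A := by
    funext i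
    ext x
    simp
  right_inv g := by
    funext x i
    simp

/-- If `s` subsets `A₁, …, A_s` of an `r`-element set `X` are chosen
independently and uniformly at random, the probability that they generate the
whole power set of `X` as a Boolean subalgebra is
`∏_{k=1}^{r-1} (2^s - k)/2^s`. -/
theorem probability_generating_powerset {X : Type*} [Fintype X] [DecidableEq X]
    (s r : ℕ) (hr : Fintype.card X = r) :
    (Nat.card {A : Fin s → Finset X //
        ∀ Y : Set X, BoolGen (Set.range fun i => ((A i : Set X))) Y} : ℚ)
        / 2 ^ (s * r)
      = ∏ k ∈ Finset.Ico 1 r, (((2 : ℚ) ^ s - k) / 2 ^ s) := by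
  classical
  -- the equivalence between tuples of finsets and functions to Bool-vectors
  have e1 : {A : Fin s → Finset X //
      ∀ Y : Set X, BoolGen (Set.range fun i => ((A i : Set X))) Y} ≃
      {g : X → Fin s → Bool // Function.Injective g} :=
    Equiv.subtypeEquiv (finsetTupleEquiv X s) (fun A => boolGen_key A)
  have e2 : {g : X → Fin s → Bool // Function.Injective g} ≃ (X ↪ (Fin s → Bool)) :=
    Equiv.subtypeInjectiveEquivEmbedding _ _
  have hcard : Nat.card {A : Fin s → Finset X //
      ∀ Y : Set X, BoolGen (Set.range fun i => ((A i : Set X))) Y}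
      = (2 ^ s).descFactorial r := by
    rw [Nat.card_congr (e1.trans e2), Nat.card_eq_fintype_card,
      Fintype.card_embedding_eq, hr]
    congr 1
    simp [Fintype.card_fun]
  rw [hcard, cast_descFactorial]
  rcases r with _ | r'
  · simp
  · rw [Finset.range_eq_Ico, Finset.prod_eq_prod_Ico_succ_bot (Nat.succ_pos r')]
    rw [Finset.prod_div_distrib, Finset.prod_const, Nat.card_Ico]
    have h2 : ((2 : ℚ) ^ s) ≠ 0 := by positivity
    rw [pow_mul]
    field_simp
    have h3 : 1 + r' - 1 = r' := by omega
    simp only [h3, Nat.succ_eq_add_one, add_comm r' 1, Nat.cast_pow, Nat.cast_ofNat, sub_eq_neg_add]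
    ring
end

section
/- For a finite poset (P, ≤) with t order filters (including ∅ and P), there exists a family of subsets (A_p)_{p∈P} of a finite set X with p ≤ q ⟺ A_p ⊆ A_q, such that the Boolean subalgebra of 2^X generated by the A_p has exactly t atoms; hence the free Boolean algebra generated by (P, ≤) has 2^t elements. -/
lemma BoolGen.finsetSup {B : Type*} [BooleanAlgebra B] (S : Set B) {ι : Type*}
    (s : Finset ι) (f : ι → B) (h : ∀ i ∈ s, BoolGen S (f i)) :
    BoolGen S (s.sup f) := by
  classical
  induction s using Finset.induction_on with
  | empty => simpa using BoolGen.bot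
  | insert a s' hx ih =>
    rw [Finset.sup_insert]
    exact BoolGen.sup (h a (Finset.mem_insert_self a s'))
      (ih fun i hi => h i (Finset.mem_insert_of_mem hi))

lemma BoolGen.finsetInf {B : Type*} [BooleanAlgebra B] (S : Set B) {ι : Type*}
    (s : Finset ι) (f : ι → B) (h : ∀ i ∈ s, BoolGen S (f i)) :
    BoolGen S (s.inf f) := by
  classical
  induction s using Finset.induction_on with
  | empty => simpa using BoolGen.top
  | insert a s' hx ih =>
    rw [Finset.inf_insert]
    exact BoolGen.inf (h a (Finset.mem_insert_self a s'))
      (ih fun i hi => h i (Finset.mem_insert_of_mem hi))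

/-- For a finite poset `P` with `t` order filters (including `∅` and `P`),
there is a family of subsets `(A_p)` of a finite set `X` realizing the order
(`p ≤ q ↔ A_p ⊆ A_q`) such that the generated Boolean subalgebra of `2^X`
has exactly `t` atoms (the nonempty intersections `⋂_p A_p^{δ_p}`), and hence
the free Boolean algebra generated by `(P, ≤)` has `2^t` elements. -/
theorem free_boolean_algebra_card {P : Type*} [PartialOrder P] [Fintype P]
    (t : ℕ) (ht : {F : Set P | IsUpperSet F}.ncard = t) :
    ∃ (X : Type) (_ : Fintype X) (A : P → Set X),
      (∀ p q : P, p ≤ q ↔ A p ⊆ A q) ∧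
      {δ : P → Prop | (⋂ p : P, {x : X | x ∈ A p ↔ δ p}).Nonempty}.ncard = t ∧
      {Y : Set X | BoolGen (Set.range A) Y}.ncard = 2 ^ t := by
  classical
  -- The type of upper sets of `P`
  set U := {F : Set P // IsUpperSet F} with hU
  have hfinU : Finite U := by
    have : Finite (Set P) := by infer_instance
    exact Subtype.finite
  have : Fintype U := Fintype.ofFinite U
  have hcardU : Fintype.card U = t := by
    rw [← Nat.card_eq_fintype_card]
    exact (Nat.card_coe_set_eq {F : Set P | IsUpperSet F}).trans ht
  -- transport to `Fin t`
  obtain e : U ≃ Fin t := Fintype.equivFinOfCardEq hcardU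
  refine ⟨Fin t, inferInstance, fun p => {i | p ∈ (e.symm i).1}, ?_, ?_, ?_⟩
  · -- order embedding
    intro p q
    constructor
    · intro hpq i hi
      exact (e.symm i).2 hpq hi
    · intro h
      have hp : p ∈ (e.symm (e ⟨Set.Ici p, isUpperSet_Ici p⟩)).1 := by
        rw [Equiv.symm_apply_apply]; exact Set.self_mem_Ici
      have hq : q ∈ (e.symm (e ⟨Set.Ici p, isUpperSet_Ici p⟩)).1 := h hp
      rw [Equiv.symm_apply_apply] at hq
      exact hq
  · -- atoms count
    have hset : {δ : P → Prop |
        (⋂ p : P, {i : Fin t | i ∈ {j | p ∈ (e.symm j).1} ↔ δ p}).Nonempty}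
        = {F : Set P | IsUpperSet F} := by
      ext δ
      simp only [Set.mem_setOf_eq]
      constructor
      · rintro ⟨i, hi⟩
        simp only [Set.mem_iInter, Set.mem_setOf_eq] at hi
        have hFδ : (e.symm i).1 = {p | δ p} := by
          ext p; exact hi p
        have := (e.symm i).2
        rwa [hFδ] at this
      · intro hδ
        refine ⟨e ⟨{p | δ p}, hδ⟩, ?_⟩
        simp [Set.mem_iInter, Set.mem_setOf_eq, Equiv.symm_apply_apply]
    rw [hset]; exact ht
  · -- everything is generated
    set A : P → Set (Fin t) := fun p => {i | p ∈ (e.symm i).1} with hA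
    have hsingle : ∀ i : Fin t, BoolGen (Set.range A) {i} := by
      intro i
      have heq : ({i} : Set (Fin t)) =
          (Finset.univ : Finset P).inf
            (fun p => if p ∈ (e.symm i).1 then A p else (A p)ᶜ) := by
        ext j
        simp only [Finset.inf_set_eq_iInter, Set.mem_iInter, Set.mem_singleton_iff]
        constructor
        · rintro rfl
          intro q _
          by_cases hq : q ∈ (e.symm j).1 <;> simp [hq, hA]
        · intro h
          have hji : (e.symm j).1 = (e.symm i).1 := by
            ext q
            have hq := h q (Finset.mem_univ q)
            by_cases hqi : q ∈ (e.symm i).1 <;> simp [hqi, hA] at hq <;>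
              simp [hq, hqi]
          exact e.symm.injective (Subtype.ext hji)
      rw [heq]
      apply BoolGen.finsetInf
      intro p _
      by_cases hp : p ∈ (e.symm i).1
      · simp only [hp, if_true]
        exact BoolGen.base ⟨p, rfl⟩
      · simp only [hp, if_false]
        exact BoolGen.compl (BoolGen.base ⟨p, rfl⟩)
    have hall : ∀ Y : Set (Fin t), BoolGen (Set.range A) Y := by
      intro Y
      have heq : Y = Y.toFinset.sup (fun i => ({i} : Set (Fin t))) := by
        ext j
        simp [Finset.sup_eq_iSup]
      rw [heq]
      exact BoolGen.finsetSup _ _ _ fun i _ => hsingle i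
    have : {Y : Set (Fin t) | BoolGen (Set.range A) Y} = Set.univ := by
      ext Y; simp [hall Y]
    rw [hA] at this ⊢
    rw [this, Set.ncard_univ, Nat.card_eq_fintype_card, Fintype.card_set,
      Fintype.card_fin]
end
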